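/- (Phase-shift consistency, equality (pro1-2)) With the setup of the previous statement, define the dressed polarization vectors u_{{S},p} as in the paper: u_{{S},p} = e^{φ_{{S},p}}·∏_{s∈S}((ζ_s*-ζ_p*)/(ζ_s-ζ_p*)) · (vector determinant with scalar columns d_{·,s}, s ∈ S, vector last column u_·, rows S∪{p}) / det[d on S]. Then, for S = {i₁,…,i_{n-1}}: |(ζ_j-ζ_k)/(ζ_j-ζ_k*)|² · (1 + ((ζ_j-ζ_j*)(ζ_k-ζ_k*)/|ζ_j-ζ_k*|²)·|⟨u_{{S},j}, u_{{S},k}⟩|²) = |(ζ_j-ζ_k)/(ζ_j-ζ_k*)|² · det[d on S∪{j,k}]·det[d on S] / (det[d on S∪{j}]·det[d on S∪{k}]). Equivalently, |⟨u_{{S},j},u_{{S},k}⟩|² = -(|ζ_k-ζ_j*|²/((ζ_j-ζ_j*)(ζ_k-ζ_k*)))·det[rows S∪{j}, cols S∪{k}]·det[rows S∪{k}, cols S∪{j}]/(det[d on S∪{j}]·det[d on S∪{k}]). -/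

import Mathlib

open Complex Matrix BigOperators

noncomputable section

set_option maxHeartbeats 1000000 in
lemma dj_field {K : Type*} [Field K] {n : ℕ} (A : Matrix (Fin (n+2)) (Fin (n+2)) K)
    (hA : A.det ≠ 0)
    (hn0 : n < n+2 := by omega) (hn1 : n+1 < n+2 := by omega)
    (hn2 : n ≤ n+2 := by omega) :
    (A.submatrix (Fin.snoc (Fin.castLE hn2) ⟨n, hn0⟩ : Fin (n+1) → Fin (n+2))
        (Fin.snoc (Fin.castLE hn2) ⟨n, hn0⟩)).det *
      (A.submatrix (Fin.snoc (Fin.castLE hn2) ⟨n+1, hn1⟩ : Fin (n+1) → Fin (n+2))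
        (Fin.snoc (Fin.castLE hn2) ⟨n+1, hn1⟩)).det -
    (A.submatrix (Fin.snoc (Fin.castLE hn2) ⟨n, hn0⟩ : Fin (n+1) → Fin (n+2))
        (Fin.snoc (Fin.castLE hn2) ⟨n+1, hn1⟩)).det *
      (A.submatrix (Fin.snoc (Fin.castLE hn2) ⟨n+1, hn1⟩ : Fin (n+1) → Fin (n+2))
        (Fin.snoc (Fin.castLE hn2) ⟨n, hn0⟩)).det =
    A.det * (A.submatrix (Fin.castLE hn2 : Fin n → Fin (n+2))
        (Fin.castLE hn2)).det := by
  set jdx : Fin (n+2) := ⟨n, by omega⟩ with hjdx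
  set kdx : Fin (n+2) := ⟨n+1, by omega⟩ with hkdx
  have hfj : (Fin.snoc (Fin.castLE (by omega)) jdx : Fin (n+1) → Fin (n+2)) = kdx.succAbove := by
    funext i
    have h1 : kdx.succAbove i = Fin.castSucc i := by
      rw [Fin.succAbove, if_pos]
      exact (Fin.lt_def).2 (by simp [hkdx]; omega)
    rw [h1]
    cases i using Fin.lastCases with
    | last => rw [Fin.snoc_last]; exact Fin.ext (by simp [hjdx])
    | cast j => rw [Fin.snoc_castSucc]; exact Fin.ext (by simp)
  have hfk : (Fin.snoc (Fin.castLE (by omega)) kdx : Fin (n+1) → Fin (n+2)) = jdx.succAbove := by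
    funext i
    cases i using Fin.lastCases with
    | last =>
      rw [Fin.snoc_last, Fin.succAbove, if_neg]
      · exact Fin.ext (by simp [hkdx])
      · rw [Fin.lt_def]; simp [hjdx]
    | cast j =>
      rw [Fin.snoc_castSucc, Fin.succAbove, if_pos]
      · exact Fin.ext (by simp)
      · rw [Fin.lt_def]; simpa [hjdx] using j.isLt
  rw [hfj, hfk]
  -- adjugate entries
  have hjj : adjugate A jdx jdx = (A.submatrix jdx.succAbove jdx.succAbove).det := by
    rw [adjugate_fin_succ_eq_det_submatrix]
    simp [hjdx]
  have hkk : adjugate A kdx kdx = (A.submatrix kdx.succAbove kdx.succAbove).det := by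
    rw [adjugate_fin_succ_eq_det_submatrix]
    have h : ((kdx:ℕ) + (kdx:ℕ)) = 2*(n+1) := by simp [hkdx]; ring
    rw [h]
    simp [pow_mul]
  have hjk : adjugate A jdx kdx = -(A.submatrix kdx.succAbove jdx.succAbove).det := by
    rw [adjugate_fin_succ_eq_det_submatrix]
    have h : ((kdx:ℕ) + (jdx:ℕ)) = 2*n+1 := by simp [hkdx, hjdx]; ring
    rw [h]
    simp [pow_succ, pow_mul]
  have hkj : adjugate A kdx jdx = -(A.submatrix jdx.succAbove kdx.succAbove).det := by
    rw [adjugate_fin_succ_eq_det_submatrix]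
    have h : ((jdx:ℕ) + (kdx:ℕ)) = 2*n+1 := by simp [hkdx, hjdx]; ring
    rw [h]
    simp [pow_succ, pow_mul]
  -- the auxiliary matrix with adjugate columns
  set M : Matrix (Fin (n+2)) (Fin (n+2)) K :=
    Matrix.of fun i q => if (q:ℕ) < n then (if i = q then 1 else 0) else adjugate A i q with hM
  have hAM : A * M = Matrix.of fun i q : Fin (n+2) =>
      if (q:ℕ) < n then A i q else A.det * (if i = q then 1 else 0) := by
    funext i q
    by_cases hq : (q:ℕ) < n
    · simp only [Matrix.mul_apply, hM, hq, if_true]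
      simp [mul_ite, hq]
    · have h2 : (A * adjugate A) i q = A.det * (if i = q then 1 else 0) := by
        rw [Matrix.mul_adjugate]; simp [Matrix.one_apply]
      simp only [Matrix.mul_apply, hM, hq, if_false, Matrix.of_apply]
      rw [← h2, Matrix.mul_apply]
  set σ : Fin n ⊕ Fin 2 ≃ Fin (n+2) := finSumFinEquiv with hσ
  have hMdet : M.det = adjugate A jdx jdx * adjugate A kdx kdx
      - adjugate A jdx kdx * adjugate A kdx jdx := by
    have h1 : M.det = (M.submatrix σ σ).det := (Matrix.det_submatrix_equiv_self σ M).symm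
    have h2 : M.submatrix σ σ = Matrix.fromBlocks 1
        (Matrix.of fun i q => adjugate A (σ (Sum.inl i)) (σ (Sum.inr q))) 0
        (Matrix.of fun i q => adjugate A (σ (Sum.inr i)) (σ (Sum.inr q))) := by
      ext i q
      cases i with
      | inl i => cases q with
        | inl q =>
          simp [hM, hσ, Matrix.one_apply, Fin.ext_iff, finSumFinEquiv]
        | inr q =>
          simp [hM, hσ, finSumFinEquiv]
      | inr i => cases q with
        | inl q =>
          simp [hM, hσ, Matrix.one_apply, Fin.ext_iff, finSumFinEquiv]
          omega
        | inr q =>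
          simp [hM, hσ, finSumFinEquiv]
    rw [h1, h2, Matrix.det_fromBlocks_zero₂₁, Matrix.det_one, one_mul, Matrix.det_fin_two]
    have e0 : σ (Sum.inr 0) = jdx := by
      rw [hjdx]; exact Fin.ext (by simp [hσ, finSumFinEquiv])
    have e1 : σ (Sum.inr 1) = kdx := by
      rw [hkdx]; exact Fin.ext (by simp [hσ, finSumFinEquiv])
    simp only [Matrix.of_apply]
    rw [e0, e1]
  have hAMdet : (A * M).det
      = (A.submatrix (Fin.castLE (by omega) : Fin n → Fin (n+2)) (Fin.castLE (by omega))).det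
        * (A.det * A.det) := by
    have h1 : (A * M).det = ((A * M).submatrix σ σ).det :=
      (Matrix.det_submatrix_equiv_self σ (A * M)).symm
    have h2 : (A * M).submatrix σ σ = Matrix.fromBlocks
        (A.submatrix (Fin.castLE (by omega) : Fin n → Fin (n+2)) (Fin.castLE (by omega))) 0
        (Matrix.of fun i q => A (σ (Sum.inr i)) (Fin.castLE (by omega) q))
        (A.det • (1 : Matrix (Fin 2) (Fin 2) K)) := by
      ext i q
      cases i with
      | inl i => cases q with
        | inl q =>
          simp only [hAM, hσ, Matrix.submatrix_apply, Matrix.fromBlocks_apply₁₁,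
            finSumFinEquiv_apply_left, Fin.coe_castAdd, Matrix.of_apply]
          rw [if_pos q.isLt]
          exact congrArg₂ A (Fin.ext (by simp)) (Fin.ext (by simp))
        | inr q =>
          simp [hAM, hσ, finSumFinEquiv, Fin.ext_iff]
          omega
      | inr i => cases q with
        | inl q =>
          simp only [hAM, hσ, Matrix.submatrix_apply, Matrix.fromBlocks_apply₂₁,
            finSumFinEquiv_apply_left, Fin.coe_castAdd, Matrix.of_apply]
          rw [if_pos q.isLt]
          exact congrArg₂ A rfl (Fin.ext (by simp))
        | inr q =>
          simp [hAM, hσ, finSumFinEquiv, Matrix.one_apply, Fin.ext_iff]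
    rw [h1, h2, Matrix.det_fromBlocks_zero₁₂]
    congr 1
    rw [Matrix.det_smul, Matrix.det_one]
    simp [sq]
  rw [Matrix.det_mul, hMdet] at hAMdet
  have hjk' : (A.submatrix kdx.succAbove jdx.succAbove).det = -adjugate A jdx kdx := by
    rw [hjk]; ring
  have hkj' : (A.submatrix jdx.succAbove kdx.succAbove).det = -adjugate A kdx jdx := by
    rw [hkj]; ring
  rw [← hjj, ← hkk, hjk', hkj']
  refine mul_left_cancel₀ hA ?_
  linear_combination hAMdet
set_option maxHeartbeats 1000000 in
lemma dj_complex {n : ℕ} (A : Matrix (Fin (n+2)) (Fin (n+2)) ℂ)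
    (hn0 : n < n+2 := by omega) (hn1 : n+1 < n+2 := by omega)
    (hn2 : n ≤ n+2 := by omega) :
    (A.submatrix (Fin.snoc (Fin.castLE hn2) ⟨n, hn0⟩ : Fin (n+1) → Fin (n+2))
        (Fin.snoc (Fin.castLE hn2) ⟨n, hn0⟩)).det *
      (A.submatrix (Fin.snoc (Fin.castLE hn2) ⟨n+1, hn1⟩ : Fin (n+1) → Fin (n+2))
        (Fin.snoc (Fin.castLE hn2) ⟨n+1, hn1⟩)).det -
    (A.submatrix (Fin.snoc (Fin.castLE hn2) ⟨n, hn0⟩ : Fin (n+1) → Fin (n+2))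
        (Fin.snoc (Fin.castLE hn2) ⟨n+1, hn1⟩)).det *
      (A.submatrix (Fin.snoc (Fin.castLE hn2) ⟨n+1, hn1⟩ : Fin (n+1) → Fin (n+2))
        (Fin.snoc (Fin.castLE hn2) ⟨n, hn0⟩)).det =
    A.det * (A.submatrix (Fin.castLE hn2 : Fin n → Fin (n+2))
        (Fin.castLE hn2)).det := by
  set B : Matrix (Fin (n+2)) (Fin (n+2)) (Polynomial ℂ) := Matrix.charmatrix (-A) with hB
  have hBdet : B.det ≠ 0 := by
    have h : B.det = (-A).charpoly := rfl
    rw [h]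
    exact (Matrix.charpoly_monic _).ne_zero
  set K := FractionRing (Polynomial ℂ) with hK
  set φ : Polynomial ℂ →+* K := algebraMap (Polynomial ℂ) K with hφ
  have hφinj : Function.Injective φ := IsFractionRing.injective (Polynomial ℂ) K
  set ψ : Polynomial ℂ →+* ℂ := Polynomial.evalRingHom 0 with hψ
  have hBA : B.map ψ = A := by
    ext i q
    by_cases h : i = q
    · subst h
      simp [hB, Matrix.charmatrix_apply_eq, hψ]
    · simp [hB, Matrix.charmatrix_apply_ne _ _ _ h, hψ]
  have hmapdet : ∀ {S : Type} [CommRing S] (f : Polynomial ℂ →+* S) (N : ℕ)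
      (r c : Fin N → Fin (n+2)),
      (((B.map f).submatrix r c)).det = f ((B.submatrix r c).det) := by
    intro S _ f N r c
    have h : (B.submatrix r c).map f = (B.map f).submatrix r c := by
      ext i q; simp
    rw [RingHom.map_det, RingHom.mapMatrix_apply, h]
  have hmapdet2 : ∀ {S : Type} [CommRing S] (f : Polynomial ℂ →+* S),
      (B.map f).det = f B.det := by
    intro S _ f
    rw [RingHom.map_det, RingHom.mapMatrix_apply]
  have h1 := dj_field (B.map φ) (by
    rw [hmapdet2]
    intro h
    exact hBdet (hφinj (by rw [h, map_zero])))
  rw [hmapdet2] at h1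
  simp only [hmapdet] at h1
  have h2 : (B.submatrix (Fin.snoc (Fin.castLE (by omega)) ⟨n, by omega⟩ : Fin (n+1) → Fin (n+2))
        (Fin.snoc (Fin.castLE (by omega)) ⟨n, by omega⟩)).det *
      (B.submatrix (Fin.snoc (Fin.castLE (by omega)) ⟨n+1, by omega⟩ : Fin (n+1) → Fin (n+2))
        (Fin.snoc (Fin.castLE (by omega)) ⟨n+1, by omega⟩)).det -
    (B.submatrix (Fin.snoc (Fin.castLE (by omega)) ⟨n, by omega⟩ : Fin (n+1) → Fin (n+2))
        (Fin.snoc (Fin.castLE (by omega)) ⟨n+1, by omega⟩)).det *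
      (B.submatrix (Fin.snoc (Fin.castLE (by omega)) ⟨n+1, by omega⟩ : Fin (n+1) → Fin (n+2))
        (Fin.snoc (Fin.castLE (by omega)) ⟨n, by omega⟩)).det =
    B.det * (B.submatrix (Fin.castLE (by omega) : Fin n → Fin (n+2))
        (Fin.castLE (by omega))).det := by
    apply hφinj
    rw [map_sub, _root_.map_mul, _root_.map_mul, _root_.map_mul]
    exact h1
  have h3 := congrArg ψ h2
  rw [map_sub, _root_.map_mul, _root_.map_mul, _root_.map_mul] at h3
  simp only [← hmapdet ψ, ← hmapdet2 ψ, hBA] at h3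
  exact h3

lemma lemA {n : ℕ} (X : Matrix (Fin (n+1)) (Fin (n+1)) ℂ) (α β : Fin (n+1) → ℂ) :
    ∑ p : Fin (n+1), ∑ q : Fin (n+1), (-1:ℂ)^((p:ℕ)+(q:ℕ))
        * (X.submatrix p.succAbove Fin.castSucc).det
        * (X.submatrix Fin.castSucc q.succAbove).det
        * (β q - α p) * X p q
    = (β (Fin.last n) - α (Fin.last n)) * (X.submatrix Fin.castSucc Fin.castSucc).det
        * X.det := by
  set Cf : Fin (n+1) → ℂ := fun p => (X.submatrix p.succAbove Fin.castSucc).det with hCf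
  set Cg : Fin (n+1) → ℂ := fun q => (X.submatrix Fin.castSucc q.succAbove).det with hCg
  set Y : Fin (n+1) → Matrix (Fin (n+1)) (Fin (n+1)) ℂ :=
    fun q => X.submatrix id (Fin.snoc Fin.castSucc q) with hYdef
  set Z : Fin (n+1) → Matrix (Fin (n+1)) (Fin (n+1)) ℂ :=
    fun p => X.submatrix (Fin.snoc Fin.castSucc p) id with hZdef
  have hY : ∀ q, (Y q).det = ∑ p : Fin (n+1), (-1:ℂ)^((p:ℕ)+n) * Cf p * X p q := by
    intro q
    rw [Matrix.det_succ_column (Y q) (Fin.last n)]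
    refine Finset.sum_congr rfl fun p _ => ?_
    have h1 : Y q p (Fin.last n) = X p q := by simp [hYdef]
    have h2 : (Y q).submatrix p.succAbove (Fin.last n).succAbove
        = X.submatrix p.succAbove Fin.castSucc := by
      rw [Fin.succAbove_last]
      ext i j
      simp [hYdef]
    rw [h1, h2, Fin.val_last, hCf]
    ring
  have hZ : ∀ p, (Z p).det = ∑ q : Fin (n+1), (-1:ℂ)^((q:ℕ)+n) * Cg q * X p q := by
    intro p
    rw [Matrix.det_succ_row (Z p) (Fin.last n)]
    refine Finset.sum_congr rfl fun q _ => ?_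
    have h1 : Z p (Fin.last n) q = X p q := by simp [hZdef]
    have h2 : (Z p).submatrix (Fin.last n).succAbove q.succAbove
        = X.submatrix Fin.castSucc q.succAbove := by
      rw [Fin.succAbove_last]
      ext i j
      simp [hZdef]
    rw [h1, h2, Fin.val_last, hCg]
    ring
  have hY0 : ∀ q0 : Fin n, (Y (Fin.castSucc q0)).det = 0 := by
    intro q0
    apply Matrix.det_zero_of_column_eq (i := Fin.castSucc q0) (j := Fin.last n)
      (Fin.castSucc_lt_last q0).ne
    intro k
    simp [hYdef]
  have hZ0 : ∀ p0 : Fin n, (Z (Fin.castSucc p0)).det = 0 := by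
    intro p0
    apply Matrix.det_zero_of_row_eq (i := Fin.castSucc p0) (j := Fin.last n)
      (Fin.castSucc_lt_last p0).ne
    funext k
    simp [hZdef]
  have hYlast : Y (Fin.last n) = X := by
    ext i j
    cases j using Fin.lastCases with
    | last => simp [hYdef]
    | cast j => simp [hYdef]
  -- split the summand
  have hsplit : ∀ p q : Fin (n+1), (-1:ℂ)^((p:ℕ)+(q:ℕ)) * Cf p * Cg q * (β q - α p) * X p q
      = (β (Fin.last n) - α (Fin.last n)) * ((-1:ℂ)^((q:ℕ)+n) * Cg q)
          * ((-1:ℂ)^((p:ℕ)+n) * Cf p * X p q)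
        - (β (Fin.last n) - β q) * ((-1:ℂ)^((q:ℕ)+n) * Cg q)
          * ((-1:ℂ)^((p:ℕ)+n) * Cf p * X p q)
        + (α (Fin.last n) - α p) * ((-1:ℂ)^((p:ℕ)+n) * Cf p)
          * ((-1:ℂ)^((q:ℕ)+n) * Cg q * X p q) := by
    intro p q
    have hsign : ((-1:ℂ)^((p:ℕ)+n)) * ((-1:ℂ)^((q:ℕ)+n)) = (-1:ℂ)^((p:ℕ)+(q:ℕ)) := by
      rw [← pow_add]
      have h : (p:ℕ)+n + ((q:ℕ)+n) = (p:ℕ)+(q:ℕ) + 2*n := by ring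
      rw [h, pow_add, pow_mul]
      simp
    rw [← hsign]
    ring
  calc ∑ p : Fin (n+1), ∑ q : Fin (n+1), (-1:ℂ)^((p:ℕ)+(q:ℕ)) * Cf p * Cg q * (β q - α p) * X p q
      = ∑ p : Fin (n+1), ∑ q : Fin (n+1),
          ((β (Fin.last n) - α (Fin.last n)) * ((-1:ℂ)^((q:ℕ)+n) * Cg q)
            * ((-1:ℂ)^((p:ℕ)+n) * Cf p * X p q)
          - (β (Fin.last n) - β q) * ((-1:ℂ)^((q:ℕ)+n) * Cg q)
            * ((-1:ℂ)^((p:ℕ)+n) * Cf p * X p q)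
          + (α (Fin.last n) - α p) * ((-1:ℂ)^((p:ℕ)+n) * Cf p)
            * ((-1:ℂ)^((q:ℕ)+n) * Cg q * X p q)) := by
        exact Finset.sum_congr rfl fun p _ => Finset.sum_congr rfl fun q _ => hsplit p q
    _ = (∑ q : Fin (n+1), ∑ p : Fin (n+1), (β (Fin.last n) - α (Fin.last n))
            * ((-1:ℂ)^((q:ℕ)+n) * Cg q) * ((-1:ℂ)^((p:ℕ)+n) * Cf p * X p q))
        - (∑ q : Fin (n+1), ∑ p : Fin (n+1), (β (Fin.last n) - β q)
            * ((-1:ℂ)^((q:ℕ)+n) * Cg q) * ((-1:ℂ)^((p:ℕ)+n) * Cf p * X p q))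
        + (∑ p : Fin (n+1), ∑ q : Fin (n+1), (α (Fin.last n) - α p)
            * ((-1:ℂ)^((p:ℕ)+n) * Cf p) * ((-1:ℂ)^((q:ℕ)+n) * Cg q * X p q)) := by
        simp only [Finset.sum_add_distrib, Finset.sum_sub_distrib]
        congr 1
        congr 1
        · exact Finset.sum_comm
        · exact Finset.sum_comm
    _ = (β (Fin.last n) - α (Fin.last n)) * (X.submatrix Fin.castSucc Fin.castSucc).det
        * X.det := by
        have e1 : ∀ q : Fin (n+1), ∑ p : Fin (n+1), (β (Fin.last n) - α (Fin.last n))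
            * ((-1:ℂ)^((q:ℕ)+n) * Cg q) * ((-1:ℂ)^((p:ℕ)+n) * Cf p * X p q)
            = (β (Fin.last n) - α (Fin.last n)) * ((-1:ℂ)^((q:ℕ)+n) * Cg q) * (Y q).det := by
          intro q
          rw [hY q, Finset.mul_sum]
        have e2 : ∀ q : Fin (n+1), ∑ p : Fin (n+1), (β (Fin.last n) - β q)
            * ((-1:ℂ)^((q:ℕ)+n) * Cg q) * ((-1:ℂ)^((p:ℕ)+n) * Cf p * X p q)
            = (β (Fin.last n) - β q) * ((-1:ℂ)^((q:ℕ)+n) * Cg q) * (Y q).det := by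
          intro q
          rw [hY q, Finset.mul_sum]
        have e3 : ∀ p : Fin (n+1), ∑ q : Fin (n+1), (α (Fin.last n) - α p)
            * ((-1:ℂ)^((p:ℕ)+n) * Cf p) * ((-1:ℂ)^((q:ℕ)+n) * Cg q * X p q)
            = (α (Fin.last n) - α p) * ((-1:ℂ)^((p:ℕ)+n) * Cf p) * (Z p).det := by
          intro p
          rw [hZ p, Finset.mul_sum]
        simp only [e1, e2, e3]
        have s2 : ∑ q : Fin (n+1), (β (Fin.last n) - β q) * ((-1:ℂ)^((q:ℕ)+n) * Cg q)
            * (Y q).det = 0 := by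
          refine Finset.sum_eq_zero fun q _ => ?_
          cases q using Fin.lastCases with
          | last => simp
          | cast q0 => rw [hY0 q0, mul_zero]
        have s3 : ∑ p : Fin (n+1), (α (Fin.last n) - α p) * ((-1:ℂ)^((p:ℕ)+n) * Cf p)
            * (Z p).det = 0 := by
          refine Finset.sum_eq_zero fun p _ => ?_
          cases p using Fin.lastCases with
          | last => simp
          | cast p0 => rw [hZ0 p0, mul_zero]
        have s1 : ∑ q : Fin (n+1), (β (Fin.last n) - α (Fin.last n))
            * ((-1:ℂ)^((q:ℕ)+n) * Cg q) * (Y q).det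
            = (β (Fin.last n) - α (Fin.last n)) * (X.submatrix Fin.castSucc Fin.castSucc).det
              * X.det := by
          rw [Finset.sum_eq_single (Fin.last n)]
          · rw [hYlast, Fin.val_last]
            have hpow : (-1:ℂ)^(n+n) = 1 := by
              have h2n : n + n = 2*n := by ring
              rw [h2n, pow_mul]; simp
            simp only [hpow, hCg, Fin.succAbove_last]
            ring
          · intro q _ hq
            cases q using Fin.lastCases with
            | last => exact absurd rfl hq
            | cast q0 => rw [hY0 q0, mul_zero]
          · intro h
            exact absurd (Finset.mem_univ _) h
        rw [s1, s2, s3]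
        ring

/-- Hermitian inner product on ℂ^m, linear in the first slot. -/
def herm {m : ℕ} (u v : Fin m → ℂ) : ℂ := ∑ a, u a * (starRingEnd ℂ) (v a)

set_option maxHeartbeats 1000000 in
theorem stmt19 {m n : ℕ} (ζ : Fin (n+2) → ℂ) (hinj : Function.Injective ζ)
    (him : ∀ p, 0 < (ζ p).im)
    (u : Fin (n+2) → Fin m → ℂ) (hu : ∀ p, herm (u p) (u p) = 1)
    -- indices: S = {i₁,…,iₙ} = {0,…,n-1}, j = n, k = n+1
    (d : Matrix (Fin (n+2)) (Fin (n+2)) ℂ)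
    (hd : ∀ p q, d p q = Complex.I / (ζ q - (starRingEnd ℂ) (ζ p)) * herm (u p) (u q))
    (jdx kdx : Fin (n+2)) (hj : jdx = ⟨n, by omega⟩) (hk : kdx = ⟨n+1, by omega⟩)
    (e : Fin n → Fin (n+2)) (he : e = Fin.castLE (by omega))
    (fj fk : Fin (n+1) → Fin (n+2))
    (hfj : fj = Fin.snoc (Fin.castLE (by omega)) jdx)
    (hfk : fk = Fin.snoc (Fin.castLE (by omega)) kdx)
    (DS DSj DSk : ℂ)
    (hDS : DS = (d.submatrix e e).det)
    (hDSj : DSj = (d.submatrix fj fj).det)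
    (hDSk : DSk = (d.submatrix fk fk).det)
    (hDSne : DS ≠ 0) (hDSjne : DSj ≠ 0) (hDSkne : DSk ≠ 0)
    -- rj = e^{-2φ_{{S},j}}, rk = e^{-2φ_{{S},k}}, positive reals
    (rj rk : ℝ) (hrj : 0 < rj) (hrk : 0 < rk)
    (hrje : (rj : ℂ) = ((∏ s : Fin n, (‖(ζ (e s) - ζ jdx) /
        (ζ (e s) - (starRingEnd ℂ) (ζ jdx))‖)^2 : ℝ) : ℂ) * DSj / (d jdx jdx * DS))
    (hrke : (rk : ℂ) = ((∏ s : Fin n, (‖(ζ (e s) - ζ kdx) /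
        (ζ (e s) - (starRingEnd ℂ) (ζ kdx))‖)^2 : ℝ) : ℂ) * DSk / (d kdx kdx * DS)) :
    -- vector determinants: rows S∪{p}, scalar columns d_{·,s} (s ∈ S), vector last column
    let Vec : (Fin (n+1) → Fin (n+2)) → Fin m → ℂ := fun f a =>
      Matrix.det (fun p q : Fin (n+1) =>
        if h : (q : ℕ) < n then d (f p) (e ⟨q, h⟩) else u (f p) a)
    -- dressed polarization vectors u_{{S},j} and u_{{S},k}
    let uSj : Fin m → ℂ := fun a =>
      (((Real.sqrt rj)⁻¹ : ℝ) : ℂ) *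
        (∏ s : Fin n, ((starRingEnd ℂ) (ζ (e s)) - (starRingEnd ℂ) (ζ jdx)) /
          (ζ (e s) - (starRingEnd ℂ) (ζ jdx))) * Vec fj a / DS
    let uSk : Fin m → ℂ := fun a =>
      (((Real.sqrt rk)⁻¹ : ℝ) : ℂ) *
        (∏ s : Fin n, ((starRingEnd ℂ) (ζ (e s)) - (starRingEnd ℂ) (ζ kdx)) /
          (ζ (e s) - (starRingEnd ℂ) (ζ kdx))) * Vec fk a / DS
    (((‖(ζ jdx - ζ kdx) / (ζ jdx - (starRingEnd ℂ) (ζ kdx))‖)^2 : ℝ) : ℂ) *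
      (1 + (ζ jdx - (starRingEnd ℂ) (ζ jdx)) * (ζ kdx - (starRingEnd ℂ) (ζ kdx)) /
          (((‖ζ jdx - (starRingEnd ℂ) (ζ kdx)‖)^2 : ℝ) : ℂ) *
          (((‖herm uSj uSk‖)^2 : ℝ) : ℂ)) =
    (((‖(ζ jdx - ζ kdx) / (ζ jdx - (starRingEnd ℂ) (ζ kdx))‖)^2 : ℝ) : ℂ) *
      d.det * DS / (DSj * DSk) := by
  intro Vec uSj uSk
  -- basic facts
  have hconjsub : ∀ p q : Fin (n+2), (starRingEnd ℂ) (ζ q - (starRingEnd ℂ) (ζ p))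
      = (starRingEnd ℂ) (ζ q) - ζ p := by
    intro p q
    rw [map_sub, Complex.conj_conj]
  have hζne : ∀ p q : Fin (n+2), ζ q - (starRingEnd ℂ) (ζ p) ≠ 0 := by
    intro p q h
    have h2 : (ζ q - (starRingEnd ℂ) (ζ p)).im = 0 := by rw [h]; rfl
    rw [Complex.sub_im, Complex.conj_im] at h2
    have := him p; have := him q
    linarith
  have hermswap : ∀ v w : Fin m → ℂ, (starRingEnd ℂ) (herm v w) = herm w v := by
    intro v w
    unfold herm
    rw [map_sum]
    refine Finset.sum_congr rfl fun a _ => ?_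
    rw [_root_.map_mul, Complex.conj_conj]
    ring
  have hdsym : ∀ p q, (starRingEnd ℂ) (d p q) = d q p := by
    intro p q
    rw [hd p q, hd q p, _root_.map_mul, map_div₀, Complex.conj_I, hconjsub, hermswap]
    have h1 := hζne q p
    have h2 : (starRingEnd ℂ) (ζ q) - ζ p ≠ 0 := by
      intro h
      apply h1
      have : ζ p - (starRingEnd ℂ) (ζ q) = -((starRingEnd ℂ) (ζ q) - ζ p) := by ring
      rw [this, h]; ring
    field_simp
    ring
  have hermd : ∀ p q, herm (u p) (u q)
      = -Complex.I * (ζ q - (starRingEnd ℂ) (ζ p)) * d p q := by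
    intro p q
    rw [hd]
    have h1 := hζne p q
    field_simp
    ring_nf
    rw [Complex.I_sq]
    ring
  have hconjdet : ∀ (N : ℕ) (r c : Fin N → Fin (n+2)),
      (starRingEnd ℂ) ((d.submatrix r c).det) = (d.submatrix c r).det := by
    intro N r c
    rw [RingHom.map_det, RingHom.mapMatrix_apply]
    have h : (d.submatrix r c).map (starRingEnd ℂ) = (d.submatrix c r)ᵀ := by
      ext i q
      simp [hdsym]
    rw [h, Matrix.det_transpose]
  -- index facts
  have hfje : ∀ s : Fin n, fj (Fin.castSucc s) = e s := by
    intro s; rw [hfj, Fin.snoc_castSucc, he]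
  have hfke : ∀ s : Fin n, fk (Fin.castSucc s) = e s := by
    intro s; rw [hfk, Fin.snoc_castSucc, he]
  have hfjl : fj (Fin.last n) = jdx := by rw [hfj, Fin.snoc_last]
  have hfkl : fk (Fin.last n) = kdx := by rw [hfk, Fin.snoc_last]
  set X : Matrix (Fin (n+1)) (Fin (n+1)) ℂ := d.submatrix fj fk with hX
  have hXcc : X.submatrix Fin.castSucc Fin.castSucc = d.submatrix e e := by
    ext i q
    simp only [hX, Matrix.submatrix_apply]
    rw [hfje, hfke]
  -- Laplace expansion of the vector determinants
  have hVecj : ∀ a, Vec fj a = ∑ p : Fin (n+1), (-1:ℂ)^((p:ℕ)+n)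
      * (X.submatrix p.succAbove Fin.castSucc).det * u (fj p) a := by
    intro a
    set W : Matrix (Fin (n+1)) (Fin (n+1)) ℂ := Matrix.of (fun p q : Fin (n+1) =>
        if h : (q : ℕ) < n then d (fj p) (e ⟨q, h⟩) else u (fj p) a) with hWdef
    have hW : Vec fj a = W.det := rfl
    rw [hW, Matrix.det_succ_column W (Fin.last n)]
    refine Finset.sum_congr rfl fun p _ => ?_
    have h1 : W p (Fin.last n) = u (fj p) a := by
      show (if h : ((Fin.last n : Fin (n+1)) : ℕ) < n then d (fj p) (e ⟨_, h⟩)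
        else u (fj p) a) = u (fj p) a
      rw [dif_neg]
      simp
    have h2 : W.submatrix p.succAbove (Fin.last n).succAbove
        = X.submatrix p.succAbove Fin.castSucc := by
      rw [Fin.succAbove_last]
      ext i q
      show (if h : ((Fin.castSucc q : Fin (n+1)) : ℕ) < n
          then d (fj (p.succAbove i)) (e ⟨_, h⟩) else u (fj (p.succAbove i)) a)
        = d (fj (p.succAbove i)) (fk (Fin.castSucc q))
      rw [dif_pos (by simpa using q.isLt)]
      rw [hfke q]
      rfl
    rw [h1, h2, Fin.val_last]
    ring
  have hVeck : ∀ a, (starRingEnd ℂ) (Vec fk a) = ∑ q : Fin (n+1), (-1:ℂ)^((q:ℕ)+n)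
      * (X.submatrix Fin.castSucc q.succAbove).det * (starRingEnd ℂ) (u (fk q) a) := by
    intro a
    set W : Matrix (Fin (n+1)) (Fin (n+1)) ℂ := Matrix.of (fun p q : Fin (n+1) =>
        if h : (q : ℕ) < n then d (fk p) (e ⟨q, h⟩) else u (fk p) a) with hWdef
    have hW : (starRingEnd ℂ) (Vec fk a) = (W.map (starRingEnd ℂ)).det := by
      rw [← RingHom.mapMatrix_apply, ← RingHom.map_det]
      rfl
    rw [hW, Matrix.det_succ_column _ (Fin.last n)]
    refine Finset.sum_congr rfl fun q _ => ?_
    have h1 : (W.map (starRingEnd ℂ)) q (Fin.last n) = (starRingEnd ℂ) (u (fk q) a) := by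
      simp only [Matrix.map_apply]
      congr 1
      show (if h : ((Fin.last n : Fin (n+1)) : ℕ) < n then d (fk q) (e ⟨_, h⟩)
        else u (fk q) a) = u (fk q) a
      rw [dif_neg]
      simp
    have h2 : (W.map (starRingEnd ℂ)).submatrix q.succAbove (Fin.last n).succAbove
        = (X.submatrix Fin.castSucc q.succAbove)ᵀ := by
      rw [Fin.succAbove_last]
      ext i j
      simp only [Matrix.submatrix_apply, Matrix.map_apply, Matrix.transpose_apply]
      have h3 : W (q.succAbove i) (Fin.castSucc j) = d (fk (q.succAbove i)) (e j) := by
        show (if h : ((Fin.castSucc j : Fin (n+1)) : ℕ) < n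
            then d (fk (q.succAbove i)) (e ⟨_, h⟩) else u (fk (q.succAbove i)) a)
          = d (fk (q.succAbove i)) (e j)
        rw [dif_pos (by simpa using j.isLt)]
        rfl
      rw [h3, hdsym]
      show d (e j) (fk (q.succAbove i)) = d (fj (Fin.castSucc j)) (fk (q.succAbove i))
      rw [hfje j]
    rw [h1, h2, Matrix.det_transpose, Fin.val_last]
    ring
  have hsign : ∀ p q : Fin (n+1), ((-1:ℂ)^((p:ℕ)+n)) * ((-1:ℂ)^((q:ℕ)+n))
      = (-1:ℂ)^((p:ℕ)+(q:ℕ)) := by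
    intro p q
    rw [← pow_add]
    have h : (p:ℕ)+n + ((q:ℕ)+n) = (p:ℕ)+(q:ℕ) + 2*n := by ring
    rw [h, pow_add, pow_mul]
    simp
  have hswap : ∀ F : Fin m → Fin (n+1) → Fin (n+1) → ℂ,
      ∑ a, ∑ p, ∑ q, F a p q = ∑ p, ∑ q, ∑ a, F a p q := by
    intro F
    rw [Finset.sum_comm]
    exact Finset.sum_congr rfl fun p _ => Finset.sum_comm
  have hL2 : herm (Vec fj) (Vec fk) = -Complex.I * (ζ kdx - (starRingEnd ℂ) (ζ jdx))
      * (d.submatrix e e).det * X.det := by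
    have h0 : herm (Vec fj) (Vec fk) = ∑ a, Vec fj a * (starRingEnd ℂ) (Vec fk a) := rfl
    rw [h0]
    have h1 : ∀ a : Fin m, Vec fj a * (starRingEnd ℂ) (Vec fk a)
        = ∑ p : Fin (n+1), ∑ q : Fin (n+1),
          ((-1:ℂ)^((p:ℕ)+n) * (X.submatrix p.succAbove Fin.castSucc).det
            * ((-1:ℂ)^((q:ℕ)+n) * (X.submatrix Fin.castSucc q.succAbove).det))
          * (u (fj p) a * (starRingEnd ℂ) (u (fk q) a)) := by
      intro a
      rw [hVecj a, hVeck a, Finset.sum_mul_sum]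
      exact Finset.sum_congr rfl fun p _ => Finset.sum_congr rfl fun q _ => by ring
    simp only [h1]
    rw [hswap]
    have h3 : ∀ p q : Fin (n+1), ∑ a : Fin m,
        ((-1:ℂ)^((p:ℕ)+n) * (X.submatrix p.succAbove Fin.castSucc).det
          * ((-1:ℂ)^((q:ℕ)+n) * (X.submatrix Fin.castSucc q.succAbove).det))
        * (u (fj p) a * (starRingEnd ℂ) (u (fk q) a))
        = -Complex.I * ((-1:ℂ)^((p:ℕ)+(q:ℕ)) * (X.submatrix p.succAbove Fin.castSucc).det
            * (X.submatrix Fin.castSucc q.succAbove).det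
            * ((fun q' : Fin (n+1) => ζ (fk q')) q - (fun p' : Fin (n+1) =>
              (starRingEnd ℂ) (ζ (fj p'))) p) * X p q) := by
      intro p q
      rw [← Finset.mul_sum]
      have hh : ∑ a, u (fj p) a * (starRingEnd ℂ) (u (fk q) a)
          = herm (u (fj p)) (u (fk q)) := rfl
      rw [hh, hermd]
      have hx : d (fj p) (fk q) = X p q := rfl
      rw [hx, ← hsign p q]
      ring
    simp only [h3]
    simp only [← Finset.mul_sum]
    rw [lemA X (fun p' => (starRingEnd ℂ) (ζ (fj p')))
      (fun q' => ζ (fk q')), hfkl, hfjl, hXcc]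
    ring
  -- named quantities
  set H : ℂ := herm uSj uSk with hHdef
  set Pj : ℂ := ∏ s : Fin n, ((starRingEnd ℂ) (ζ (e s)) - (starRingEnd ℂ) (ζ jdx)) /
      (ζ (e s) - (starRingEnd ℂ) (ζ jdx)) with hPjd
  set Pk : ℂ := ∏ s : Fin n, ((starRingEnd ℂ) (ζ (e s)) - (starRingEnd ℂ) (ζ kdx)) /
      (ζ (e s) - (starRingEnd ℂ) (ζ kdx)) with hPkd
  set cj : ℂ := (((Real.sqrt rj)⁻¹ : ℝ) : ℂ) * Pj with hcjd
  set ck : ℂ := (((Real.sqrt rk)⁻¹ : ℝ) : ℂ) * Pk with hckd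
  have huSj : ∀ a, uSj a = cj * Vec fj a / DS := fun a => rfl
  have huSk : ∀ a, uSk a = ck * Vec fk a / DS := fun a => rfl
  have habs2 : ∀ z : ℂ, (((‖z‖)^2 : ℝ) : ℂ) = z * (starRingEnd ℂ) z := by
    intro z
    rw [Complex.sq_norm, Complex.mul_conj]
  have hDSc : (starRingEnd ℂ) DS = DS := by rw [hDS, hconjdet]
  set Mkj : ℂ := (d.submatrix fk fj).det with hMkjd
  have hXconj : (starRingEnd ℂ) X.det = Mkj := by rw [hX, hconjdet, hMkjd]
  have hH1 : H = cj * (starRingEnd ℂ) ck / (DS * DS) * herm (Vec fj) (Vec fk) := by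
    rw [hHdef]
    have h0 : herm uSj uSk = ∑ a, uSj a * (starRingEnd ℂ) (uSk a) := rfl
    have h0' : herm (Vec fj) (Vec fk) = ∑ a, Vec fj a * (starRingEnd ℂ) (Vec fk a) := rfl
    rw [h0, h0', Finset.mul_sum]
    refine Finset.sum_congr rfl fun a _ => ?_
    rw [huSj a, huSk a, map_div₀, _root_.map_mul, hDSc]
    field_simp
  have hH : H = cj * (starRingEnd ℂ) ck / (DS * DS)
      * (-Complex.I * (ζ kdx - (starRingEnd ℂ) (ζ jdx)) * DS * X.det) := by
    rw [hH1, hL2, ← hDS]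
  have hHc : (starRingEnd ℂ) H = (starRingEnd ℂ) cj * ck / (DS * DS)
      * (Complex.I * ((starRingEnd ℂ) (ζ kdx) - ζ jdx) * DS * Mkj) := by
    rw [hH]
    simp only [map_div₀, _root_.map_mul, map_neg, map_sub, Complex.conj_conj,
      Complex.conj_I, hDSc, hXconj]
    ring
  -- |cj|^2 and |ck|^2
  have hrjne : (rj : ℂ) ≠ 0 := by
    simp only [ne_eq, Complex.ofReal_eq_zero]
    exact hrj.ne'
  have hrkne : (rk : ℂ) ≠ 0 := by
    simp only [ne_eq, Complex.ofReal_eq_zero]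
    exact hrk.ne'
  have hdjj : d jdx jdx = Complex.I / (ζ jdx - (starRingEnd ℂ) (ζ jdx)) := by
    rw [hd, hu, mul_one]
  have hdkk : d kdx kdx = Complex.I / (ζ kdx - (starRingEnd ℂ) (ζ kdx)) := by
    rw [hd, hu, mul_one]
  have hdjjne : d jdx jdx ≠ 0 := by
    rw [hdjj]
    exact div_ne_zero Complex.I_ne_zero (hζne jdx jdx)
  have hdkkne : d kdx kdx ≠ 0 := by
    rw [hdkk]
    exact div_ne_zero Complex.I_ne_zero (hζne kdx kdx)
  have hPjc : Pj * (starRingEnd ℂ) Pj = ((∏ s : Fin n, (‖(ζ (e s) - ζ jdx) /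
      (ζ (e s) - (starRingEnd ℂ) (ζ jdx))‖)^2 : ℝ) : ℂ) := by
    rw [hPjd, map_prod, ← Finset.prod_mul_distrib, Complex.ofReal_prod]
    refine Finset.prod_congr rfl fun s _ => ?_
    rw [← habs2]
    congr 2
    rw [← map_sub, norm_div, norm_div, Complex.norm_conj]
  have hPkc : Pk * (starRingEnd ℂ) Pk = ((∏ s : Fin n, (‖(ζ (e s) - ζ kdx) /
      (ζ (e s) - (starRingEnd ℂ) (ζ kdx))‖)^2 : ℝ) : ℂ) := by
    rw [hPkd, map_prod, ← Finset.prod_mul_distrib, Complex.ofReal_prod]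
    refine Finset.prod_congr rfl fun s _ => ?_
    rw [← habs2]
    congr 2
    rw [← map_sub, norm_div, norm_div, Complex.norm_conj]
  have hsqj : ((((Real.sqrt rj)⁻¹ : ℝ)) : ℂ) * ((((Real.sqrt rj)⁻¹ : ℝ)) : ℂ)
      = ((rj : ℂ))⁻¹ := by
    rw [← Complex.ofReal_mul, ← mul_inv, Real.mul_self_sqrt hrj.le, Complex.ofReal_inv]
  have hsqk : ((((Real.sqrt rk)⁻¹ : ℝ)) : ℂ) * ((((Real.sqrt rk)⁻¹ : ℝ)) : ℂ)
      = ((rk : ℂ))⁻¹ := by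
    rw [← Complex.ofReal_mul, ← mul_inv, Real.mul_self_sqrt hrk.le, Complex.ofReal_inv]
  have hcjcj : cj * (starRingEnd ℂ) cj = d jdx jdx * DS / DSj := by
    have step1 : cj * (starRingEnd ℂ) cj = ((rj : ℂ))⁻¹ * (Pj * (starRingEnd ℂ) Pj) := by
      rw [hcjd, _root_.map_mul, Complex.conj_ofReal, ← hsqj]
      ring
    have hPine : ((∏ s : Fin n, (‖(ζ (e s) - ζ jdx) /
        (ζ (e s) - (starRingEnd ℂ) (ζ jdx))‖)^2 : ℝ) : ℂ) ≠ 0 := by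
      intro h0
      rw [h0, zero_mul, zero_div] at hrje
      exact hrjne hrje
    rw [step1, hPjc]
    revert hPine hrje
    generalize ((∏ s : Fin n, (‖(ζ (e s) - ζ jdx) /
        (ζ (e s) - (starRingEnd ℂ) (ζ jdx))‖)^2 : ℝ) : ℂ) = Pc
    intro hrje hPine
    rw [hrje]
    field_simp
  have hckck : ck * (starRingEnd ℂ) ck = d kdx kdx * DS / DSk := by
    have step1 : ck * (starRingEnd ℂ) ck = ((rk : ℂ))⁻¹ * (Pk * (starRingEnd ℂ) Pk) := by
      rw [hckd, _root_.map_mul, Complex.conj_ofReal, ← hsqk]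
      ring
    have hPine : ((∏ s : Fin n, (‖(ζ (e s) - ζ kdx) /
        (ζ (e s) - (starRingEnd ℂ) (ζ kdx))‖)^2 : ℝ) : ℂ) ≠ 0 := by
      intro h0
      rw [h0, zero_mul, zero_div] at hrke
      exact hrkne hrke
    rw [step1, hPkc]
    revert hPine hrke
    generalize ((∏ s : Fin n, (‖(ζ (e s) - ζ kdx) /
        (ζ (e s) - (starRingEnd ℂ) (ζ kdx))‖)^2 : ℝ) : ℂ) = Pc
    intro hrke hPine
    rw [hrke]
    field_simp
  -- Desnanot–Jacobi
  have hDJ : DSj * DSk - X.det * Mkj = d.det * DS := by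
    have h := dj_complex (n := n) d
    have hDSj' : DSj = (d.submatrix
        (Fin.snoc (Fin.castLE (by omega)) ⟨n, by omega⟩ : Fin (n+1) → Fin (n+2))
        (Fin.snoc (Fin.castLE (by omega)) ⟨n, by omega⟩)).det := by
      rw [hDSj, hfj, hj]
    have hDSk' : DSk = (d.submatrix
        (Fin.snoc (Fin.castLE (by omega)) ⟨n+1, by omega⟩ : Fin (n+1) → Fin (n+2))
        (Fin.snoc (Fin.castLE (by omega)) ⟨n+1, by omega⟩)).det := by
      rw [hDSk, hfk, hk]
    have hX' : X.det = (d.submatrix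
        (Fin.snoc (Fin.castLE (by omega)) ⟨n, by omega⟩ : Fin (n+1) → Fin (n+2))
        (Fin.snoc (Fin.castLE (by omega)) ⟨n+1, by omega⟩)).det := by
      rw [hX, hfj, hfk, hj, hk]
    have hMkj' : Mkj = (d.submatrix
        (Fin.snoc (Fin.castLE (by omega)) ⟨n+1, by omega⟩ : Fin (n+1) → Fin (n+2))
        (Fin.snoc (Fin.castLE (by omega)) ⟨n, by omega⟩)).det := by
      rw [hMkjd, hfj, hfk, hj, hk]
    have hDS' : DS = (d.submatrix (Fin.castLE (by omega) : Fin n → Fin (n+2))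
        (Fin.castLE (by omega))).det := by
      rw [hDS, he]
    rw [← hDSj', ← hDSk', ← hX', ← hMkj', ← hDS'] at h
    exact h
  -- the square modulus of H
  set Q2 : ℂ := (ζ jdx - (starRingEnd ℂ) (ζ kdx))
      * (starRingEnd ℂ) (ζ jdx - (starRingEnd ℂ) (ζ kdx)) with hQ2d
  have hKK : (ζ kdx - (starRingEnd ℂ) (ζ jdx)) * ((starRingEnd ℂ) (ζ kdx) - ζ jdx)
      = Q2 := by
    rw [hQ2d, map_sub, Complex.conj_conj]
    ring
  have hcjcj2 : cj * (starRingEnd ℂ) cj * DSj = d jdx jdx * DS := by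
    rw [hcjcj, div_mul_cancel₀ _ hDSjne]
  have hckck2 : ck * (starRingEnd ℂ) ck * DSk = d kdx kdx * DS := by
    rw [hckck, div_mul_cancel₀ _ hDSkne]
  have hB1 : H * (DS * DS) = cj * (starRingEnd ℂ) ck
      * (-Complex.I * (ζ kdx - (starRingEnd ℂ) (ζ jdx)) * DS * X.det) := by
    rw [hH]
    field_simp
  have hB2 : (starRingEnd ℂ) H * (DS * DS) = (starRingEnd ℂ) cj * ck
      * (Complex.I * ((starRingEnd ℂ) (ζ kdx) - ζ jdx) * DS * Mkj) := by
    rw [hHc]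
    field_simp
  have hD4ne : DS * DS * (DS * DS) ≠ 0 :=
    mul_ne_zero (mul_ne_zero hDSne hDSne) (mul_ne_zero hDSne hDSne)
  have hM4 : H * (starRingEnd ℂ) H * (DSj * DSk) * (DS * DS * (DS * DS))
      = d jdx jdx * d kdx kdx * Q2 * (X.det * Mkj) * (DS * DS * (DS * DS)) := by
    linear_combination ((starRingEnd ℂ) H * (DS * DS) * DSj * DSk) * hB1
      + (cj * (starRingEnd ℂ) ck * (-Complex.I * (ζ kdx - (starRingEnd ℂ) (ζ jdx)) * DS * X.det)
          * DSj * DSk) * hB2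
      + ((ck * (starRingEnd ℂ) ck * DSk) * (-Complex.I * Complex.I)
          * ((ζ kdx - (starRingEnd ℂ) (ζ jdx)) * ((starRingEnd ℂ) (ζ kdx) - ζ jdx))
          * (DS * DS) * (X.det * Mkj)) * hcjcj2
      + (d jdx jdx * DS * (-Complex.I * Complex.I)
          * ((ζ kdx - (starRingEnd ℂ) (ζ jdx)) * ((starRingEnd ℂ) (ζ kdx) - ζ jdx))
          * (DS * DS) * (X.det * Mkj)) * hckck2
      + (d jdx jdx * d kdx kdx * (DS * DS * (DS * DS)) * (-Complex.I * Complex.I)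
          * (X.det * Mkj)) * hKK
      + (-(d jdx jdx * d kdx kdx * (DS * DS * (DS * DS)) * Q2 * X.det * Mkj)) * Complex.I_sq
  have hM2 : H * (starRingEnd ℂ) H * (DSj * DSk)
      = d jdx jdx * d kdx kdx * Q2 * (X.det * Mkj) :=
    mul_right_cancel₀ hD4ne hM4
  have hc1 : d jdx jdx * (ζ jdx - (starRingEnd ℂ) (ζ jdx)) = Complex.I := by
    rw [hdjj, div_mul_cancel₀ _ (hζne jdx jdx)]
  have hc2 : d kdx kdx * (ζ kdx - (starRingEnd ℂ) (ζ kdx)) = Complex.I := by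
    rw [hdkk, div_mul_cancel₀ _ (hζne kdx kdx)]
  have hQ2ne : Q2 ≠ 0 := by
    rw [hQ2d]
    refine mul_ne_zero (hζne kdx jdx) ?_
    rw [map_sub, Complex.conj_conj]
    exact fun h0 => hζne jdx kdx (by linear_combination -h0)
  -- Desnanot–Jacobi
  have hDJ : DSj * DSk - X.det * Mkj = d.det * DS := by
    have h := dj_complex (n := n) d
    have hDSj' : DSj = (d.submatrix
        (Fin.snoc (Fin.castLE (by omega)) ⟨n, by omega⟩ : Fin (n+1) → Fin (n+2))
        (Fin.snoc (Fin.castLE (by omega)) ⟨n, by omega⟩)).det := by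
      rw [hDSj, hfj, hj]
    have hDSk' : DSk = (d.submatrix
        (Fin.snoc (Fin.castLE (by omega)) ⟨n+1, by omega⟩ : Fin (n+1) → Fin (n+2))
        (Fin.snoc (Fin.castLE (by omega)) ⟨n+1, by omega⟩)).det := by
      rw [hDSk, hfk, hk]
    have hX' : X.det = (d.submatrix
        (Fin.snoc (Fin.castLE (by omega)) ⟨n, by omega⟩ : Fin (n+1) → Fin (n+2))
        (Fin.snoc (Fin.castLE (by omega)) ⟨n+1, by omega⟩)).det := by
      rw [hX, hfj, hfk, hj, hk]
    have hMkj' : Mkj = (d.submatrix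
        (Fin.snoc (Fin.castLE (by omega)) ⟨n+1, by omega⟩ : Fin (n+1) → Fin (n+2))
        (Fin.snoc (Fin.castLE (by omega)) ⟨n, by omega⟩)).det := by
      rw [hMkjd, hfj, hfk, hj, hk]
    have hDS' : DS = (d.submatrix (Fin.castLE (by omega) : Fin n → Fin (n+2))
        (Fin.castLE (by omega))).det := by
      rw [hDS, he]
    rw [← hDSj', ← hDSk', ← hX', ← hMkj', ← hDS'] at h
    exact h
  have key : 1 + (ζ jdx - (starRingEnd ℂ) (ζ jdx)) * (ζ kdx - (starRingEnd ℂ) (ζ kdx))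
        / Q2 * (H * (starRingEnd ℂ) H)
      = d.det * DS / (DSj * DSk) := by
    field_simp
    linear_combination ((ζ jdx - (starRingEnd ℂ) (ζ jdx))
        * (ζ kdx - (starRingEnd ℂ) (ζ kdx))) * hM2
      + (Q2 * (X.det * Mkj) * (ζ kdx - (starRingEnd ℂ) (ζ kdx)) * d kdx kdx) * hc1
      + (Q2 * (X.det * Mkj) * Complex.I) * hc2
      + (Q2 * (X.det * Mkj)) * Complex.I_sq
      + Q2 * hDJ
  rw [habs2 (ζ jdx - (starRingEnd ℂ) (ζ kdx)), habs2 H, ← hQ2d, key]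
  ring
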